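/- For θ ∈ (0, π/4), with m := tan θ ∈ (0,1), the vector V(θ) := (4/π)·( (E(√(1−m²)) − m²·K(√(1−m²)))/(1−m²) , (m·(K(√(1−m²)) − E(√(1−m²))))/(1−m²) ) ∈ ℝ² equals (4/π)·∫₀^{π/2} (cos θ·cos²t, sin θ·sin²t) / √(cos²θ·cos²t + sin²θ·sin²t) dt. -/

import Mathlib

open Real

/-- The complete elliptic integral of the first kind. -/
noncomputable def ellipticK (k : ℝ) : ℝ :=
  ∫ x in (0:ℝ)..1, 1 / (Real.sqrt (1 - x ^ 2) * Real.sqrt (1 - k ^ 2 * x ^ 2))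

/-- The complete elliptic integral of the second kind. -/
noncomputable def ellipticE (k : ℝ) : ℝ :=
  ∫ x in (0:ℝ)..1, Real.sqrt (1 - k ^ 2 * x ^ 2) / Real.sqrt (1 - x ^ 2)



open MeasureTheory Set Filter intervalIntegral


lemma aux_rpow_int : IntervalIntegrable (fun x : ℝ => (1 - x) ^ (-(1/2) : ℝ)) volume 0 1 := by
  have h := (intervalIntegrable_rpow' (a := (0:ℝ)) (b := 1)
    (r := -(1/2)) (by norm_num)).comp_sub_left 1
  norm_num at h
  exact h.symm

lemma rpow_eq_inv_sqrt {y : ℝ} (hy : 0 ≤ y) : y ^ (-(1/2) : ℝ) = (Real.sqrt y)⁻¹ := by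
  rw [Real.rpow_neg hy, Real.sqrt_eq_rpow]

lemma aux_intK {k : ℝ} (hk0 : 0 ≤ k) (hk1 : k < 1) :
    IntervalIntegrable (fun x : ℝ => 1 / (Real.sqrt (1 - x ^ 2) * Real.sqrt (1 - k ^ 2 * x ^ 2)))
      volume 0 1 := by
  have hkk : (0:ℝ) < 1 - k ^ 2 := by nlinarith
  apply IntervalIntegrable.mono_fun'
    (g := fun x : ℝ => (Real.sqrt (1 - k ^ 2))⁻¹ * (1 - x) ^ (-(1/2) : ℝ))
    (aux_rpow_int.const_mul _)
  · apply Measurable.aestronglyMeasurable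
    have m1 : Measurable fun x : ℝ => Real.sqrt (1 - x ^ 2) :=
      (Real.continuous_sqrt.comp (by continuity)).measurable
    have m2 : Measurable fun x : ℝ => Real.sqrt (1 - k ^ 2 * x ^ 2) :=
      (Real.continuous_sqrt.comp (by continuity)).measurable
    exact measurable_const.div (m1.mul m2)
  · filter_upwards [ae_restrict_mem measurableSet_uIoc] with x hx
    rw [uIoc_of_le (by norm_num : (0:ℝ) ≤ 1)] at hx
    obtain ⟨hx0, hx1⟩ := hx
    rcases eq_or_lt_of_le hx1 with h1 | h1
    · subst h1
      simp [Real.sqrt_eq_zero', Real.zero_rpow]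
    · have h2 : (0:ℝ) < 1 - x := by linarith
      have hx2 : x ^ 2 ≤ 1 := by nlinarith
      have h3 : Real.sqrt (1 - x) ≤ Real.sqrt (1 - x ^ 2) := by
        apply Real.sqrt_le_sqrt; nlinarith
      have h4 : Real.sqrt (1 - k ^ 2) ≤ Real.sqrt (1 - k ^ 2 * x ^ 2) := by
        apply Real.sqrt_le_sqrt; nlinarith [sq_nonneg k]
      have h5 : (0:ℝ) < Real.sqrt (1 - x) := Real.sqrt_pos.2 h2
      have h6 : (0:ℝ) < Real.sqrt (1 - k ^ 2) := Real.sqrt_pos.2 hkk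
      rw [rpow_eq_inv_sqrt h2.le, Real.norm_eq_abs, abs_of_nonneg (by positivity),
        one_div, ← mul_inv]
      apply inv_anti₀ (by positivity)
      calc Real.sqrt (1 - k ^ 2) * Real.sqrt (1 - x)
          ≤ Real.sqrt (1 - k ^ 2 * x ^ 2) * Real.sqrt (1 - x ^ 2) :=
            mul_le_mul h4 h3 h5.le (Real.sqrt_nonneg _)
        _ = Real.sqrt (1 - x ^ 2) * Real.sqrt (1 - k ^ 2 * x ^ 2) := mul_comm _ _

lemma aux_intE {k : ℝ} (hk0 : 0 ≤ k) (hk1 : k < 1) :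
    IntervalIntegrable (fun x : ℝ => Real.sqrt (1 - k ^ 2 * x ^ 2) / Real.sqrt (1 - x ^ 2))
      volume 0 1 := by
  apply IntervalIntegrable.mono_fun' (g := fun x : ℝ => (1 - x) ^ (-(1/2) : ℝ)) aux_rpow_int
  · apply Measurable.aestronglyMeasurable
    have m1 : Measurable fun x : ℝ => Real.sqrt (1 - x ^ 2) :=
      (Real.continuous_sqrt.comp (by continuity)).measurable
    have m2 : Measurable fun x : ℝ => Real.sqrt (1 - k ^ 2 * x ^ 2) :=
      (Real.continuous_sqrt.comp (by continuity)).measurable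
    exact m2.div m1
  · filter_upwards [ae_restrict_mem measurableSet_uIoc] with x hx
    rw [uIoc_of_le (by norm_num : (0:ℝ) ≤ 1)] at hx
    obtain ⟨hx0, hx1⟩ := hx
    rcases eq_or_lt_of_le hx1 with h1 | h1
    · subst h1
      simp [Real.sqrt_eq_zero', Real.zero_rpow]
    · have h2 : (0:ℝ) < 1 - x := by linarith
      have hx2 : x ^ 2 ≤ 1 := by nlinarith
      have h3 : Real.sqrt (1 - x) ≤ Real.sqrt (1 - x ^ 2) := by
        apply Real.sqrt_le_sqrt; nlinarith
      have h5 : (0:ℝ) < Real.sqrt (1 - x) := Real.sqrt_pos.2 h2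
      have ha : (0:ℝ) < Real.sqrt (1 - x ^ 2) := lt_of_lt_of_le h5 h3
      have h7 : Real.sqrt (1 - k ^ 2 * x ^ 2) ≤ 1 := by
        have := Real.sqrt_le_sqrt (show 1 - k ^ 2 * x ^ 2 ≤ 1 by nlinarith [sq_nonneg k, sq_nonneg x])
        simpa using this
      rw [rpow_eq_inv_sqrt h2.le, Real.norm_eq_abs, abs_of_nonneg (by positivity)]
      rw [div_le_iff₀ ha, ← one_div, div_mul_eq_mul_div, one_mul, le_div_iff₀ h5]
      nlinarith [Real.sqrt_nonneg (1 - k ^ 2 * x ^ 2)]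



lemma aux_subst {F G : ℝ → ℝ}
    (hF : ContinuousOn F (Set.Ico 0 1))
    (hFi : IntervalIntegrable F volume 0 1)
    (hG : ContinuousOn G (Set.Icc 0 (π/2)))
    (hGF : ∀ t ∈ Set.Ico 0 (π/2), G t = cos t * F (sin t)) :
    ∫ t in (0:ℝ)..(π/2), G t = ∫ x in (0:ℝ)..1, F x := by
  have hpi : (0:ℝ) < π/2 := by positivity
  set l : Filter ℝ := nhdsWithin (π/2) (Set.Ico 0 (π/2)) with hl
  have hne : l.NeBot := by
    rw [hl, ← mem_closure_iff_nhdsWithin_neBot, closure_Ico hpi.ne]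
    exact ⟨hpi.le, le_refl _⟩
  -- integrability of G
  have hGi : IntervalIntegrable G volume 0 (π/2) := by
    apply ContinuousOn.intervalIntegrable
    rwa [uIcc_of_le hpi.le]
  -- limit of φ
  have hφ : Tendsto (fun c => ∫ t in (0:ℝ)..c, G t) l (nhds (∫ t in (0:ℝ)..(π/2), G t)) := by
    have hc : ContinuousOn (fun c => ∫ t in (0:ℝ)..c, G t) (Set.uIcc 0 (π/2)) :=
      intervalIntegral.continuousOn_primitive_interval' hGi Set.left_mem_uIcc
    have := (hc (π/2) (Set.right_mem_uIcc)).tendsto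
    apply this.mono_left
    apply nhdsWithin_mono
    rw [uIcc_of_le hpi.le]
    exact Set.Ico_subset_Icc_self
  -- limit of ψ
  have hψ : Tendsto (fun c => ∫ x in (0:ℝ)..(sin c), F x) l (nhds (∫ x in (0:ℝ)..1, F x)) := by
    have hc : ContinuousOn (fun u => ∫ x in (0:ℝ)..u, F x) (Set.uIcc 0 1) :=
      intervalIntegral.continuousOn_primitive_interval' hFi Set.left_mem_uIcc
    have h1 := (hc 1 Set.right_mem_uIcc).tendsto
    have hsin : Tendsto sin l (nhdsWithin 1 (Set.uIcc 0 1)) := by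
      rw [tendsto_nhdsWithin_iff]
      constructor
      · have : Tendsto sin (nhds (π/2)) (nhds 1) := by
          simpa using (Real.continuous_sin.tendsto (π/2))
        exact this.mono_left nhdsWithin_le_nhds
      · filter_upwards [self_mem_nhdsWithin] with c hc2
        obtain ⟨hc0, hcl⟩ := hc2
        rw [Set.uIcc_of_le (by norm_num : (0:ℝ) ≤ 1)]
        exact ⟨Real.sin_nonneg_of_nonneg_of_le_pi hc0 (by linarith [Real.pi_pos]),
          Real.sin_le_one c⟩
    exact h1.comp hsin
  -- φ = ψ on Ico 0 (π/2)
  have heq : ∀ c ∈ Set.Ico 0 (π/2), (∫ t in (0:ℝ)..c, G t) = ∫ x in (0:ℝ)..(sin c), F x := by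
    intro c hc
    have h0c : (0:ℝ) ≤ c := hc.1
    have hcpi : c < π/2 := hc.2
    have himg : sin '' Set.uIcc 0 c ⊆ Set.Ico 0 1 := by
      rintro y ⟨x, hx, rfl⟩
      rw [uIcc_of_le h0c] at hx
      obtain ⟨hx0, hxc⟩ := hx
      have hπ := Real.pi_pos
      refine ⟨Real.sin_nonneg_of_nonneg_of_le_pi hx0 (by linarith), ?_⟩
      have : sin x < sin (π/2) := by
        apply Real.strictMonoOn_sin ⟨by linarith, by linarith⟩ ⟨by linarith, le_refl _⟩
        linarith
      simpa using this
    have hsub := intervalIntegral.integral_comp_smul_deriv'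
      (f := sin) (f' := cos) (g := F) (a := 0) (b := c)
      (fun x _ => Real.hasDerivAt_sin x) Real.continuous_cos.continuousOn
      (hF.mono himg)
    rw [Real.sin_zero] at hsub
    rw [← hsub]
    apply intervalIntegral.integral_congr
    intro t ht
    rw [uIcc_of_le h0c] at ht
    rw [hGF t ⟨ht.1, lt_of_le_of_lt ht.2 hcpi⟩]
    simp [smul_eq_mul]
  have hfeq : (fun c => ∫ t in (0:ℝ)..c, G t) =ᶠ[l] fun c => ∫ x in (0:ℝ)..(sin c), F x := by
    filter_upwards [self_mem_nhdsWithin] with c hc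
    exact heq c hc
  exact tendsto_nhds_unique (hφ.congr' hfeq) hψ


lemma aux_bpos {k x : ℝ} (hk0 : 0 ≤ k) (hk1 : k < 1) (hx : x ^ 2 ≤ 1) :
    0 < 1 - k ^ 2 * x ^ 2 := by nlinarith [sq_nonneg k]

lemma aux_intF2 {k : ℝ} (hk0 : 0 ≤ k) (hk1 : k < 1) :
    IntervalIntegrable
      (fun x : ℝ => x ^ 2 / (Real.sqrt (1 - x ^ 2) * Real.sqrt (1 - k ^ 2 * x ^ 2)))
      volume 0 1 := by
  apply IntervalIntegrable.mono_fun' (aux_intK hk0 hk1)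
  · apply Measurable.aestronglyMeasurable
    have m1 : Measurable fun x : ℝ => Real.sqrt (1 - x ^ 2) :=
      (Real.continuous_sqrt.comp (by continuity)).measurable
    have m2 : Measurable fun x : ℝ => Real.sqrt (1 - k ^ 2 * x ^ 2) :=
      (Real.continuous_sqrt.comp (by continuity)).measurable
    exact (measurable_id.pow_const 2).div (m1.mul m2)
  · filter_upwards [ae_restrict_mem measurableSet_uIoc] with x hx
    rw [uIoc_of_le (by norm_num : (0:ℝ) ≤ 1)] at hx
    obtain ⟨hx0, hx1⟩ := hx
    rw [Real.norm_eq_abs, abs_of_nonneg (by positivity)]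
    rcases eq_or_lt_of_le hx1 with h1 | h1
    · subst h1; norm_num
    · have ha : (0:ℝ) < Real.sqrt (1 - x ^ 2) := Real.sqrt_pos.2 (by nlinarith)
      have hb : (0:ℝ) < Real.sqrt (1 - k ^ 2 * x ^ 2) :=
        Real.sqrt_pos.2 (aux_bpos hk0 hk1 (by nlinarith))
      have hx2 : x ^ 2 ≤ 1 := by nlinarith
      rw [div_le_div_iff₀ (by positivity) (by positivity)]
      nlinarith [mul_pos ha hb]

lemma aux_xE {k : ℝ} (hk0 : 0 ≤ k) (hk1 : k < 1) :
    ellipticE k - (1 - k ^ 2) * ellipticK k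
      = k ^ 2 * ∫ x in (0:ℝ)..1, Real.sqrt (1 - x ^ 2) / Real.sqrt (1 - k ^ 2 * x ^ 2) := by
  rw [ellipticE, ellipticK, ← intervalIntegral.integral_const_mul,
    ← intervalIntegral.integral_const_mul,
    ← intervalIntegral.integral_sub (aux_intE hk0 hk1) ((aux_intK hk0 hk1).const_mul _)]
  apply intervalIntegral.integral_congr
  intro x hx
  rw [uIcc_of_le (by norm_num : (0:ℝ) ≤ 1)] at hx
  obtain ⟨hx0, hx1⟩ := hx
  rcases eq_or_lt_of_le hx1 with h1 | h1
  · subst h1; norm_num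
  · have ha : (0:ℝ) < Real.sqrt (1 - x ^ 2) := Real.sqrt_pos.2 (by nlinarith)
    have hb : (0:ℝ) < Real.sqrt (1 - k ^ 2 * x ^ 2) :=
      Real.sqrt_pos.2 (aux_bpos hk0 hk1 (by nlinarith))
    have ha2 : Real.sqrt (1 - x ^ 2) ^ 2 = 1 - x ^ 2 := Real.sq_sqrt (by nlinarith)
    have hb2 : Real.sqrt (1 - k ^ 2 * x ^ 2) ^ 2 = 1 - k ^ 2 * x ^ 2 :=
      Real.sq_sqrt (aux_bpos hk0 hk1 (by nlinarith)).le
    field_simp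
    linear_combination hb2 - k ^ 2 * ha2

lemma aux_xK {k : ℝ} (hk0 : 0 ≤ k) (hk1 : k < 1) :
    ellipticK k - ellipticE k
      = k ^ 2 * ∫ x in (0:ℝ)..1,
          x ^ 2 / (Real.sqrt (1 - x ^ 2) * Real.sqrt (1 - k ^ 2 * x ^ 2)) := by
  rw [ellipticE, ellipticK, ← intervalIntegral.integral_const_mul,
    ← intervalIntegral.integral_sub (aux_intK hk0 hk1) (aux_intE hk0 hk1)]
  apply intervalIntegral.integral_congr
  intro x hx
  rw [uIcc_of_le (by norm_num : (0:ℝ) ≤ 1)] at hx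
  obtain ⟨hx0, hx1⟩ := hx
  rcases eq_or_lt_of_le hx1 with h1 | h1
  · subst h1; norm_num
  · have ha : (0:ℝ) < Real.sqrt (1 - x ^ 2) := Real.sqrt_pos.2 (by nlinarith)
    have hb : (0:ℝ) < Real.sqrt (1 - k ^ 2 * x ^ 2) :=
      Real.sqrt_pos.2 (aux_bpos hk0 hk1 (by nlinarith))
    have ha2 : Real.sqrt (1 - x ^ 2) ^ 2 = 1 - x ^ 2 := Real.sq_sqrt (by nlinarith)
    have hb2 : Real.sqrt (1 - k ^ 2 * x ^ 2) ^ 2 = 1 - k ^ 2 * x ^ 2 :=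
      Real.sq_sqrt (aux_bpos hk0 hk1 (by nlinarith)).le
    field_simp
    rw [show (1:ℝ) - x ^ 2 * k ^ 2 = 1 - k ^ 2 * x ^ 2 by ring, hb2]
    ring

lemma aux_Gcont {k : ℝ} (hk0 : 0 ≤ k) (hk1 : k < 1) (num : ℝ → ℝ) (hnum : Continuous num) :
    Continuous fun t : ℝ => num t / Real.sqrt (1 - k ^ 2 * sin t ^ 2) := by
  apply hnum.div
  · exact Real.continuous_sqrt.comp (by continuity)
  · intro t
    exact (Real.sqrt_pos.2 (aux_bpos hk0 hk1 (Real.sin_sq_le_one t))).ne'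

lemma aux_trig1 {k : ℝ} (hk0 : 0 ≤ k) (hk1 : k < 1) :
    (∫ t in (0:ℝ)..(π/2), cos t ^ 2 / Real.sqrt (1 - k ^ 2 * sin t ^ 2))
      = ∫ x in (0:ℝ)..1, Real.sqrt (1 - x ^ 2) / Real.sqrt (1 - k ^ 2 * x ^ 2) := by
  apply aux_subst
  · apply ContinuousOn.div
    · exact (Real.continuous_sqrt.comp (by continuity)).continuousOn
    · exact (Real.continuous_sqrt.comp (by continuity)).continuousOn
    · intro x hx
      exact (Real.sqrt_pos.2 (aux_bpos hk0 hk1 (by nlinarith [hx.1, hx.2]))).ne'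
  · apply ContinuousOn.intervalIntegrable
    apply ContinuousOn.div
    · exact (Real.continuous_sqrt.comp (by continuity)).continuousOn
    · exact (Real.continuous_sqrt.comp (by continuity)).continuousOn
    · intro x hx
      rw [uIcc_of_le (by norm_num : (0:ℝ) ≤ 1)] at hx
      exact (Real.sqrt_pos.2 (aux_bpos hk0 hk1 (by nlinarith [hx.1, hx.2]))).ne'
  · exact (aux_Gcont hk0 hk1 _ (by continuity)).continuousOn
  · intro t ht
    have hct : 0 ≤ cos t := Real.cos_nonneg_of_mem_Icc ⟨by linarith [ht.1, Real.pi_pos], ht.2.le⟩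
    have h1 : (1:ℝ) - sin t ^ 2 = cos t ^ 2 := by
      nlinarith [Real.sin_sq_add_cos_sq t]
    rw [h1, Real.sqrt_sq hct]
    ring

lemma aux_trig2 {k : ℝ} (hk0 : 0 ≤ k) (hk1 : k < 1) :
    (∫ t in (0:ℝ)..(π/2), sin t ^ 2 / Real.sqrt (1 - k ^ 2 * sin t ^ 2))
      = ∫ x in (0:ℝ)..1,
          x ^ 2 / (Real.sqrt (1 - x ^ 2) * Real.sqrt (1 - k ^ 2 * x ^ 2)) := by
  apply aux_subst
  · apply ContinuousOn.div
    · exact (continuous_pow 2).continuousOn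
    · apply ContinuousOn.mul
      · exact (Real.continuous_sqrt.comp (by continuity)).continuousOn
      · exact (Real.continuous_sqrt.comp (by continuity)).continuousOn
    · intro x hx
      have h1 : (0:ℝ) < Real.sqrt (1 - x ^ 2) :=
        Real.sqrt_pos.2 (by nlinarith [hx.1, hx.2])
      have h2 : (0:ℝ) < Real.sqrt (1 - k ^ 2 * x ^ 2) :=
        Real.sqrt_pos.2 (aux_bpos hk0 hk1 (by nlinarith [hx.1, hx.2]))
      positivity
  · exact aux_intF2 hk0 hk1
  · exact (aux_Gcont hk0 hk1 _ (by continuity)).continuousOn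
  · intro t ht
    have hπ := Real.pi_pos
    have hct : 0 < cos t := Real.cos_pos_of_mem_Ioo ⟨by linarith [ht.1], ht.2⟩
    have h1 : (1:ℝ) - sin t ^ 2 = cos t ^ 2 := by
      nlinarith [Real.sin_sq_add_cos_sq t]
    have h2 : (0:ℝ) < Real.sqrt (1 - k ^ 2 * sin t ^ 2) :=
      Real.sqrt_pos.2 (aux_bpos hk0 hk1 (Real.sin_sq_le_one t))
    rw [h1, Real.sqrt_sq hct.le]
    field_simp

/-- For `θ ∈ (0, π/4)` with `m = tan θ ∈ (0,1)`, the vector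
`V(θ) = (4/π)·((E(√(1−m²)) − m²K(√(1−m²)))/(1−m²), m(K(√(1−m²)) − E(√(1−m²)))/(1−m²))`
equals `(4/π)·∫₀^{π/2} (cos θ·cos²t, sin θ·sin²t)/√(cos²θ·cos²t + sin²θ·sin²t) dt`
(componentwise). -/
theorem stmt15 (θ : ℝ) (hθ : θ ∈ Set.Ioo 0 (π / 4)) (m : ℝ) (hm : m = Real.tan θ) :
    (4 / π) * ((ellipticE (Real.sqrt (1 - m ^ 2)) - m ^ 2 * ellipticK (Real.sqrt (1 - m ^ 2)))
        / (1 - m ^ 2))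
      = (4 / π) * ∫ t in (0:ℝ)..(π / 2),
          cos θ * cos t ^ 2 / Real.sqrt (cos θ ^ 2 * cos t ^ 2 + sin θ ^ 2 * sin t ^ 2) ∧
    (4 / π) * ((m * (ellipticK (Real.sqrt (1 - m ^ 2)) - ellipticE (Real.sqrt (1 - m ^ 2))))
        / (1 - m ^ 2))
      = (4 / π) * ∫ t in (0:ℝ)..(π / 2),
          sin θ * sin t ^ 2 / Real.sqrt (cos θ ^ 2 * cos t ^ 2 + sin θ ^ 2 * sin t ^ 2) := by

  obtain ⟨hθ0, hθ4⟩ := hθ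
  have hπ := Real.pi_pos
  have hcos : 0 < cos θ := Real.cos_pos_of_mem_Ioo ⟨by linarith, by linarith⟩
  have hm0 : 0 < m := hm ▸ Real.tan_pos_of_pos_of_lt_pi_div_two hθ0 (by linarith)
  have hm1 : m < 1 := by
    rw [hm, ← Real.tan_pi_div_four]
    exact Real.tan_lt_tan_of_nonneg_of_lt_pi_div_two hθ0.le (by linarith) hθ4
  have hm2 : (0:ℝ) < 1 - m ^ 2 := by nlinarith
  set k := Real.sqrt (1 - m ^ 2) with hk
  have hk2 : k ^ 2 = 1 - m ^ 2 := Real.sq_sqrt hm2.le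
  have hk0 : 0 ≤ k := Real.sqrt_nonneg _
  have hkp : 0 < k := Real.sqrt_pos.2 hm2
  have hk1 : k < 1 := by
    nlinarith [hk2, hk0]
  have hms : sin θ = m * cos θ := by
    rw [hm, Real.tan_eq_sin_div_cos]
    field_simp
  have hden : ∀ t : ℝ, Real.sqrt (cos θ ^ 2 * cos t ^ 2 + sin θ ^ 2 * sin t ^ 2)
      = cos θ * Real.sqrt (1 - k ^ 2 * sin t ^ 2) := by
    intro t
    rw [show cos θ ^ 2 * cos t ^ 2 + sin θ ^ 2 * sin t ^ 2
        = cos θ ^ 2 * (1 - k ^ 2 * sin t ^ 2) by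
      rw [hk2, hms]; linear_combination (cos θ ^ 2) * (Real.sin_sq_add_cos_sq t)]
    rw [Real.sqrt_mul (sq_nonneg _), Real.sqrt_sq hcos.le]
  constructor
  · congr 1
    have e1 : (∫ t in (0:ℝ)..(π/2),
        cos θ * cos t ^ 2 / Real.sqrt (cos θ ^ 2 * cos t ^ 2 + sin θ ^ 2 * sin t ^ 2))
        = ∫ t in (0:ℝ)..(π/2), cos t ^ 2 / Real.sqrt (1 - k ^ 2 * sin t ^ 2) := by
      apply intervalIntegral.integral_congr
      intro t _
      simp only [hden]
      rw [mul_div_mul_left _ _ hcos.ne']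
    rw [e1, aux_trig1 hk0 hk1, div_eq_iff hm2.ne', ← hk2,
      show m ^ 2 = 1 - k ^ 2 by rw [hk2]; ring]
    linear_combination aux_xE hk0 hk1
  · congr 1
    have e1 : (∫ t in (0:ℝ)..(π/2),
        sin θ * sin t ^ 2 / Real.sqrt (cos θ ^ 2 * cos t ^ 2 + sin θ ^ 2 * sin t ^ 2))
        = m * ∫ t in (0:ℝ)..(π/2), sin t ^ 2 / Real.sqrt (1 - k ^ 2 * sin t ^ 2) := by
      rw [← intervalIntegral.integral_const_mul]
      apply intervalIntegral.integral_congr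
      intro t _
      simp only [hden]
      rw [hms, show m * cos θ * sin t ^ 2 = cos θ * (m * sin t ^ 2) by ring,
        mul_div_mul_left _ _ hcos.ne', mul_div_assoc]
    rw [e1, aux_trig2 hk0 hk1, div_eq_iff hm2.ne', ← hk2]
    linear_combination m * aux_xK hk0 hk1
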